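/- Let f : (X,d) → (Y,ρ) be a function between metric spaces. The following are equivalent: (a) f is Cauchy continuous; (b) f is TB-regular and the family of subsets of X on which f is Cauchy continuous is closed under finite unions; (c) f is TB-regular and the family of subsets of X on which f is Cauchy continuous forms a bornology (covers X, is hereditary under inclusion of subsets, and is closed under finite unions). -/

import Mathlib

universe u v

/-- `f` is TB-regular if it maps totally bounded sets to totally bounded sets. -/
def TBRegular {X : Type u} {Y : Type v} [MetricSpace X] [MetricSpace Y] (f : X → Y) : Prop :=
  ∀ A : Set X, TotallyBounded A → TotallyBounded (f '' A)

/-- `f` is Cauchy continuous on `B` if it maps Cauchy sequences contained in `B` to Cauchy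
sequences. -/
def CauchyContOn {X : Type u} {Y : Type v} [MetricSpace X] [MetricSpace Y]
    (f : X → Y) (B : Set X) : Prop :=
  ∀ u : ℕ → X, (∀ n, u n ∈ B) → CauchySeq u → CauchySeq (f ∘ u)

/-- A family of nonempty subsets of `X` is a bornology if it covers `X`, is hereditary
(closed under taking nonempty subsets) and is closed under finite unions. -/
def IsBornologyFam {X : Type u} (𝓑 : Set (Set X)) : Prop :=
  (∀ x : X, ∃ B ∈ 𝓑, x ∈ B) ∧
  (∀ A B : Set X, B ∈ 𝓑 → A ⊆ B → A.Nonempty → A ∈ 𝓑) ∧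
  (∀ A B : Set X, A ∈ 𝓑 → B ∈ 𝓑 → A ∪ B ∈ 𝓑)

open Filter Set Topology

section Aux

variable {X : Type u} {Y : Type v} [MetricSpace X] [MetricSpace Y] {f : X → Y}

/-- A sequence with totally bounded range has a Cauchy subsequence. -/
lemma exists_cauchySeq_subseq {u : ℕ → X} (h : TotallyBounded (Set.range u)) :
    ∃ φ : ℕ → ℕ, StrictMono φ ∧ CauchySeq (u ∘ φ) := by
  set c : X → UniformSpace.Completion X := ((↑) : X → UniformSpace.Completion X) with hc
  have h2 : TotallyBounded (c '' Set.range u) :=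
    h.image (UniformSpace.Completion.uniformContinuous_coe X)
  have hK : IsCompact (closure (c '' Set.range u)) :=
    TotallyBounded.isCompact_of_isClosed (totallyBounded_closure.mpr h2) isClosed_closure
  obtain ⟨a, -, φ, hφ, ha⟩ := hK.isSeqCompact (x := fun n => c (u n))
    (fun n => subset_closure ⟨u n, ⟨n, rfl⟩, rfl⟩)
  refine ⟨φ, hφ, ?_⟩
  have hcc : CauchySeq (c ∘ (u ∘ φ)) := ha.cauchySeq
  have hiff := (UniformSpace.Completion.isUniformInducing_coe X).cauchy_map_iff
    (F := Filter.map (u ∘ φ) Filter.atTop)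
  rw [Filter.map_map] at hiff
  exact hiff.mp hcc

/-- If every sequence in `s` admits a Cauchy subsequence, then `s` is totally bounded. -/
lemma totallyBounded_of_subseq {s : Set X}
    (h : ∀ u : ℕ → X, (∀ n, u n ∈ s) → ∃ φ : ℕ → ℕ, StrictMono φ ∧ CauchySeq (u ∘ φ)) :
    TotallyBounded s := by
  rw [Metric.totallyBounded_iff]
  by_contra hc
  push_neg at hc
  obtain ⟨ε, hε, hfin⟩ := hc
  have key : ∀ t : Set X, t.Finite → ∃ x, x ∈ s ∧ ∀ y ∈ t, ε ≤ dist x y := by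
    intro t ht
    obtain ⟨x, hxs, hx⟩ := Set.not_subset.mp (hfin t ht)
    refine ⟨x, hxs, fun y hy => ?_⟩
    by_contra hlt
    push_neg at hlt
    exact hx (Set.mem_biUnion hy (Metric.mem_ball.mpr hlt))
  obtain ⟨u, hu⟩ := seq_of_forall_finite_exists
    (P := fun (x : X) (t : Set X) => x ∈ s ∧ ∀ y ∈ t, ε ≤ dist x y)
    (fun t ht => key t ht)
  obtain ⟨φ, hφ, hcau⟩ := h u (fun n => (hu n).1)
  rw [Metric.cauchySeq_iff] at hcau
  obtain ⟨N, hN⟩ := hcau ε hε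
  have h1 : ε ≤ dist (u (φ (N + 1))) (u (φ N)) :=
    (hu (φ (N + 1))).2 _ ⟨φ N, hφ (Nat.lt_succ_self N), rfl⟩
  exact absurd (hN (N + 1) (Nat.le_succ N) N le_rfl) (not_lt.mpr h1)

lemma cauchyContOn_singleton (f : X → Y) (x : X) : CauchyContOn f {x} := by
  intro v hv _
  have hvx : (f ∘ v) = fun _ => f x := funext fun n => by
    simp only [Function.comp_apply]
    rw [hv n]
  rw [hvx]
  exact cauchySeq_const _

lemma cauchyContOn_mono {A B : Set X} (h : CauchyContOn f B) (hAB : A ⊆ B) :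
    CauchyContOn f A := fun v hv hc => h v (fun n => hAB (hv n)) hc

/-- Pigeonhole: a sequence frequently in a finite set frequently takes some fixed value. -/
lemma freq_const_of_freq_mem_finite {v : ℕ → X} {F : Set X} (hF : F.Finite)
    (h : ∃ᶠ j in atTop, v j ∈ F) : ∃ c ∈ F, ∃ᶠ j in atTop, v j = c := by
  by_contra hcon
  push_neg at hcon
  have he : ∀ᶠ j in atTop, ∀ c ∈ F, v j ≠ c :=
    (eventually_all_finite hF).mpr fun c hcF => hcon c hcF
  obtain ⟨j, hj1, hj2⟩ := (h.and_eventually he).exists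
  exact hj2 _ hj1 rfl

/-- The key lemma: if `s` is a Cauchy sequence not converging to any of its own terms
and `f ∘ s` is Cauchy, then `f` is Cauchy continuous on the range of `s`. -/
lemma cauchyContOn_range {s : ℕ → X} (hs : CauchySeq s)
    (hlim : ∀ m : ℕ, ¬ Tendsto s atTop (𝓝 (s m)))
    (hfs : CauchySeq (f ∘ s)) : CauchyContOn f (Set.range s) := by
  intro v hv hvc
  choose k hk using hv
  by_cases hT : Tendsto k atTop atTop
  · have h1 : CauchySeq ((f ∘ s) ∘ k) := hfs.comp_tendsto hT
    have he : (f ∘ s) ∘ k = f ∘ v := funext fun j => by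
      simp only [Function.comp_apply, hk j]
    rwa [he] at h1
  · rw [tendsto_atTop_atTop] at hT
    push_neg at hT
    obtain ⟨N, hN⟩ := hT
    have hfreq : ∃ᶠ j in atTop, v j ∈ s '' Set.Iio N := by
      rw [frequently_atTop]
      intro a
      obtain ⟨j, hja, hjN⟩ := hN a
      exact ⟨j, hja, ⟨k j, hjN, hk j⟩⟩
    obtain ⟨c, -, hcfreq⟩ := freq_const_of_freq_mem_finite
      ((Set.finite_Iio N).image s) hfreq
    obtain ⟨ψ, hψ, hψc⟩ := Filter.extraction_of_frequently_atTop hcfreq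
    have hvtends : Tendsto v atTop (𝓝 c) := by
      refine tendsto_nhds_of_cauchySeq_of_subseq hvc hψ.tendsto_atTop ?_
      have : v ∘ ψ = fun _ => c := funext fun i => hψc i
      rw [this]; exact tendsto_const_nhds
    have hcm : c = s (k (ψ 0)) := (hψc 0).symm.trans (hk (ψ 0)).symm
    set m := k (ψ 0) with hm
    have hev : ∀ᶠ j in atTop, v j = s m := by
      by_contra hne
      obtain ⟨ψ', hψ', hψ'ne⟩ := Filter.extraction_of_frequently_atTop
        (not_eventually.mp hne)
      have hwt : Tendsto (v ∘ ψ') atTop (𝓝 (s m)) := by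
        rw [hcm] at hvtends
        exact hvtends.comp hψ'.tendsto_atTop
      have hKT : Tendsto (k ∘ ψ') atTop atTop := by
        by_contra hKT
        rw [tendsto_atTop_atTop] at hKT
        push_neg at hKT
        obtain ⟨N', hN'⟩ := hKT
        have hfreq' : ∃ᶠ i in atTop, (v ∘ ψ') i ∈ s '' Set.Iio N' := by
          rw [frequently_atTop]
          intro a
          obtain ⟨i, hia, hiN⟩ := hN' a
          exact ⟨i, hia, ⟨k (ψ' i), hiN, hk (ψ' i)⟩⟩
        obtain ⟨c', -, hc'freq⟩ := freq_const_of_freq_mem_finite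
          ((Set.finite_Iio N').image s) hfreq'
        obtain ⟨ψ'', hψ'', hψ''c⟩ := Filter.extraction_of_frequently_atTop hc'freq
        have htendc' : Tendsto (v ∘ ψ' ∘ ψ'') atTop (𝓝 (s m)) :=
          hwt.comp hψ''.tendsto_atTop
        have hconst : (v ∘ ψ' ∘ ψ'') = fun _ => c' := funext fun i => hψ''c i
        rw [hconst] at htendc'
        have : c' = s m := tendsto_nhds_unique tendsto_const_nhds htendc'
        exact hψ'ne (ψ'' 0) ((hψ''c 0).trans this)
      have hsm : Tendsto s atTop (𝓝 (s m)) := by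
        refine tendsto_nhds_of_cauchySeq_of_subseq hs hKT ?_
        have : s ∘ (k ∘ ψ') = v ∘ ψ' := funext fun i => hk (ψ' i)
        rw [this]; exact hwt
      exact hlim m hsm
    have : Tendsto (f ∘ v) atTop (𝓝 (f (s m))) := by
      refine Tendsto.congr' ?_ tendsto_const_nhds
      filter_upwards [hev] with j hj
      simp [Function.comp_apply, hj]
    exact this.cauchySeq

end Aux

section Aux2
variable {X : Type u} {Y : Type v} [MetricSpace X] [MetricSpace Y] {f : X → Y}

/-- In the convergent case, `f ∘ a` tends to `f q`. -/
lemma tendsto_comp_of_conv {q : X}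
    (hU : ∀ A B : Set X, A.Nonempty → B.Nonempty → CauchyContOn f A → CauchyContOn f B →
      CauchyContOn f (A ∪ B))
    {a : ℕ → X} (ha : Tendsto a atTop (𝓝 q)) (hca : CauchySeq a)
    (hfa : CauchySeq (f ∘ a)) : Tendsto (f ∘ a) atTop (𝓝 (f q)) := by
  by_cases hfq : ∃ᶠ j in atTop, a j = q
  · obtain ⟨ψ, hψ, hψq⟩ := Filter.extraction_of_frequently_atTop hfq
    refine tendsto_nhds_of_cauchySeq_of_subseq hfa hψ.tendsto_atTop ?_
    have hconst : (f ∘ a) ∘ ψ = fun _ => f q := funext fun i => by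
      simp [Function.comp_apply, hψq i]
    rw [hconst]; exact tendsto_const_nhds
  · rw [not_frequently] at hfq
    obtain ⟨J, hJ⟩ := eventually_atTop.mp hfq
    set a' : ℕ → X := fun j => a (j + J) with ha'def
    have ha' : Tendsto a' atTop (𝓝 q) := ha.comp (tendsto_add_atTop_nat J)
    have hca' : CauchySeq a' := (cauchySeq_shift J).mpr hca
    have hne : ∀ j, a' j ≠ q := fun j => hJ (j + J) (Nat.le_add_left J j)
    have hlim : ∀ m, ¬ Tendsto a' atTop (𝓝 (a' m)) := fun m hm =>
      hne m (tendsto_nhds_unique hm ha')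
    have hfa' : CauchySeq (f ∘ a') := by
      have hsh : (f ∘ a') = fun j => (f ∘ a) (j + J) := rfl
      rw [hsh]; exact (cauchySeq_shift J).mpr hfa
    have hcc : CauchyContOn f (Set.range a' ∪ {q}) :=
      hU _ _ ⟨a' 0, Set.mem_range_self 0⟩ ⟨q, rfl⟩ (cauchyContOn_range hca' hlim hfa')
        (cauchyContOn_singleton f q)
    set d : ℕ → X := fun i => if Even i then a' (i / 2) else q with hddef
    have hd : Tendsto d atTop (𝓝 q) := by
      rw [Metric.tendsto_atTop] at ha' ⊢
      intro δ hδ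
      obtain ⟨N1, hN1⟩ := ha' δ hδ
      refine ⟨2 * N1, fun i hi => ?_⟩
      by_cases he : Even i
      · simp only [hddef, if_pos he]; exact hN1 _ (by omega)
      · simp only [hddef, if_neg he, dist_self]; exact hδ
    have hmem : ∀ i, d i ∈ Set.range a' ∪ {q} := by
      intro i
      by_cases he : Even i
      · exact Or.inl ⟨i / 2, by simp [hddef, if_pos he]⟩
      · exact Or.inr (by simp [hddef, if_neg he])
    have hfd : CauchySeq (f ∘ d) := hcc d hmem hd.cauchySeq
    have hodd : Tendsto (f ∘ d) atTop (𝓝 (f q)) := by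
      refine tendsto_nhds_of_cauchySeq_of_subseq hfd
        (tendsto_atTop_mono (fun i => by simp only [id_eq]; omega : ∀ i : ℕ, id i ≤ 2 * i + 1) tendsto_id) ?_
      have hconst : (f ∘ d) ∘ (fun i => 2 * i + 1) = fun _ => f q := by
        funext i
        have hno : ¬ Even (2 * i + 1) := by rw [Nat.even_iff]; omega
        simp [hddef, Function.comp_apply, if_neg hno]
      rw [hconst]; exact tendsto_const_nhds
    have heven : Tendsto (f ∘ a') atTop (𝓝 (f q)) := by
      have h2 : Tendsto (fun i : ℕ => 2 * i) atTop atTop :=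
        tendsto_atTop_mono (fun i => by simp only [id_eq]; omega) tendsto_id
      refine (hodd.comp h2).congr fun i => ?_
      have hdiv : (2 * i) / 2 = i := by omega
      simp only [Function.comp_apply, hddef, if_pos (even_two_mul i), hdiv]
    exact tendsto_nhds_of_cauchySeq_of_subseq hfa (tendsto_add_atTop_nat J) heven

lemma cauchyCont_of_tb_union (hTB : TBRegular f)
    (hU : ∀ A B : Set X, A.Nonempty → B.Nonempty → CauchyContOn f A → CauchyContOn f B →
      CauchyContOn f (A ∪ B)) :
    ∀ u : ℕ → X, CauchySeq u → CauchySeq (f ∘ u) := by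
  intro u hu
  by_contra hnc
  rw [Metric.cauchySeq_iff] at hnc
  push_neg at hnc
  obtain ⟨ε, hε, hsep⟩ := hnc
  choose m hm n hn hd using hsep
  have hrange : TotallyBounded (f '' Set.range u) := hTB _ hu.totallyBounded_range
  have htb1 : TotallyBounded (Set.range (f ∘ u ∘ m)) :=
    hrange.subset (by rintro - ⟨j, rfl⟩; exact ⟨u (m j), ⟨m j, rfl⟩, rfl⟩)
  obtain ⟨φ1, hφ1, hc1⟩ := exists_cauchySeq_subseq htb1
  have htb2 : TotallyBounded (Set.range ((f ∘ u ∘ n) ∘ φ1)) :=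
    hrange.subset (by rintro - ⟨j, rfl⟩; exact ⟨u (n (φ1 j)), ⟨n (φ1 j), rfl⟩, rfl⟩)
  obtain ⟨φ2, hφ2, hc2⟩ := exists_cauchySeq_subseq htb2
  set ψ : ℕ → ℕ := φ1 ∘ φ2 with hψdef
  have hψmono : StrictMono ψ := hφ1.comp hφ2
  have hψT : Tendsto ψ atTop atTop := hψmono.tendsto_atTop
  set a : ℕ → X := u ∘ m ∘ ψ with hadef
  set b : ℕ → X := u ∘ n ∘ ψ with hbdef
  have hmψ : Tendsto (m ∘ ψ) atTop atTop := (tendsto_atTop_mono hm tendsto_id).comp hψT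
  have hnψ : Tendsto (n ∘ ψ) atTop atTop := (tendsto_atTop_mono hn tendsto_id).comp hψT
  have hca : CauchySeq a := hu.comp_tendsto hmψ
  have hcb : CauchySeq b := hu.comp_tendsto hnψ
  have hfa : CauchySeq (f ∘ a) := by
    have heq : f ∘ a = ((f ∘ u ∘ m) ∘ φ1) ∘ φ2 := rfl
    rw [heq]; exact hc1.comp_tendsto hφ2.tendsto_atTop
  have hfb : CauchySeq (f ∘ b) := hc2
  have hdist : ∀ j, ε ≤ dist (f (a j)) (f (b j)) := fun j => hd (ψ j)
  by_cases hconv : ∃ q, Tendsto u atTop (𝓝 q)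
  · obtain ⟨q, hq⟩ := hconv
    have h1 : Tendsto (f ∘ a) atTop (𝓝 (f q)) :=
      tendsto_comp_of_conv hU (hq.comp hmψ) hca hfa
    have h2 : Tendsto (f ∘ b) atTop (𝓝 (f q)) :=
      tendsto_comp_of_conv hU (hq.comp hnψ) hcb hfb
    have hdist0 : Tendsto (fun j => dist (f (a j)) (f (b j))) atTop (𝓝 0) := by
      have h3 := h1.dist h2
      simpa using h3
    obtain ⟨j, hj⟩ := (hdist0.eventually (gt_mem_nhds hε)).exists
    exact absurd hj (not_lt.mpr (hdist j))
  · have hlima : ∀ j, ¬ Tendsto a atTop (𝓝 (a j)) := fun j ht =>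
      hconv ⟨a j, tendsto_nhds_of_cauchySeq_of_subseq hu hmψ ht⟩
    have hlimb : ∀ j, ¬ Tendsto b atTop (𝓝 (b j)) := fun j ht =>
      hconv ⟨b j, tendsto_nhds_of_cauchySeq_of_subseq hu hnψ ht⟩
    have hcc : CauchyContOn f (Set.range a ∪ Set.range b) :=
      hU _ _ ⟨a 0, Set.mem_range_self 0⟩ ⟨b 0, Set.mem_range_self 0⟩
        (cauchyContOn_range hca hlima hfa) (cauchyContOn_range hcb hlimb hfb)
    set r : ℕ → ℕ := fun i => if Even i then m (ψ (i / 2)) else n (ψ (i / 2)) with hrdef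
    have hrT : Tendsto r atTop atTop := by
      rw [tendsto_atTop_atTop]
      intro B
      refine ⟨2 * B, fun i hi => ?_⟩
      have h2 : B ≤ i / 2 := by omega
      have hψge : i / 2 ≤ ψ (i / 2) := hψmono.le_apply
      by_cases he : Even i
      · simp only [hrdef, if_pos he]; exact le_trans (le_trans h2 hψge) (hm _)
      · simp only [hrdef, if_neg he]; exact le_trans (le_trans h2 hψge) (hn _)
    have hcr : CauchySeq (u ∘ r) := hu.comp_tendsto hrT
    have hmem : ∀ i, (u ∘ r) i ∈ Set.range a ∪ Set.range b := by
      intro i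
      by_cases he : Even i
      · exact Or.inl ⟨i / 2, by simp [hadef, hrdef, Function.comp_apply, if_pos he]⟩
      · exact Or.inr ⟨i / 2, by simp [hbdef, hrdef, Function.comp_apply, if_neg he]⟩
    have hfc : CauchySeq (f ∘ (u ∘ r)) := hcc _ hmem hcr
    rw [Metric.cauchySeq_iff] at hfc
    obtain ⟨N, hN⟩ := hfc ε hε
    have hlt := hN (2 * N) (by omega) (2 * N + 1) (by omega)
    have hr1 : r (2 * N) = m (ψ N) := by
      have h2 : (2 * N) / 2 = N := by omega
      simp only [hrdef, if_pos (even_two_mul N), h2]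
    have hr2 : r (2 * N + 1) = n (ψ N) := by
      have ho : ¬ Even (2 * N + 1) := by rw [Nat.even_iff]; omega
      have h2 : (2 * N + 1) / 2 = N := by omega
      simp only [hrdef, if_neg ho, h2]
    have hlt2 : dist (f (u (r (2 * N)))) (f (u (r (2 * N + 1)))) < ε := hlt
    rw [hr1, hr2] at hlt2
    exact absurd hlt2 (not_lt.mpr (hdist N))

end Aux2

theorem cauchyCont_iff_tbRegular_and_bornology {X : Type u} {Y : Type v}
    [MetricSpace X] [MetricSpace Y] (f : X → Y) :
    List.TFAE
      [∀ u : ℕ → X, CauchySeq u → CauchySeq (f ∘ u),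
       TBRegular f ∧ ∀ A B : Set X, CauchyContOn f A → CauchyContOn f B →
         CauchyContOn f (A ∪ B),
       TBRegular f ∧ IsBornologyFam {B : Set X | B.Nonempty ∧ CauchyContOn f B}] := by
  tfae_have 1 → 2 := by
    intro h
    refine ⟨?_, fun A B _ _ => fun v _ hv => h v hv⟩
    intro A hA
    apply totallyBounded_of_subseq
    intro w hw
    choose x hxA hfx using hw
    have htb : TotallyBounded (Set.range x) := hA.subset (Set.range_subset_iff.mpr hxA)
    obtain ⟨φ, hφ, hc⟩ := exists_cauchySeq_subseq htb
    refine ⟨φ, hφ, ?_⟩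
    have heq : w ∘ φ = f ∘ (x ∘ φ) := funext fun i => (hfx (φ i)).symm
    rw [heq]
    exact h _ hc
  tfae_have 2 → 3 := by
    rintro ⟨hTB, hU⟩
    refine ⟨hTB, fun x => ⟨{x}, ⟨⟨x, rfl⟩, cauchyContOn_singleton f x⟩, rfl⟩, ?_, ?_⟩
    · rintro A B ⟨-, hB⟩ hAB hAne
      exact ⟨hAne, cauchyContOn_mono hB hAB⟩
    · rintro A B ⟨hAne, hA⟩ ⟨hBne, hB⟩
      exact ⟨⟨hAne.choose, Or.inl hAne.choose_spec⟩, hU A B hA hB⟩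
  tfae_have 3 → 1 := by
    rintro ⟨hTB, -, -, hUni⟩
    exact cauchyCont_of_tb_union hTB (fun A B hAne hBne hA hB =>
      (hUni A B ⟨hAne, hA⟩ ⟨hBne, hB⟩).2)
  tfae_finish
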